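/- There exists an absolute constant C > 0 such that the following holds. Let T : Fin n₁ × ⋯ × Fin n_ℓ → ℝ be an order-ℓ Boolean tensor of tensor rank r, let λ ∈ {1,…,ℓ}, and let S be an independent set of λ-slices of T, i.e., a set of indices in Fin n_λ such that all subsets of S have pairwise distinct slice-sums. Then |S| ≤ C·r·log(r+2). -/

import Mathlib

/-- A rank-1 tensor: `R x = ∏ i, v i (x i)` for some vectors `v i`. -/
def IsRankOneTensor {l : ℕ} {n : Fin l → ℕ} (R : (∀ i, Fin (n i)) → ℝ) : Prop :=
  ∃ v : ∀ i : Fin l, Fin (n i) → ℝ, ∀ x, R x = ∏ i, v i (x i)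

/-- The tensor rank: the minimum `r` such that the tensor is a sum of `r`
rank-1 tensors. -/
noncomputable def tensorRank {l : ℕ} {n : Fin l → ℕ}
    (T : (∀ i, Fin (n i)) → ℝ) : ℕ :=
  sInf {r | ∃ R : Fin r → ((∀ i, Fin (n i)) → ℝ),
    (∀ i, IsRankOneTensor (R i)) ∧ T = ∑ i, R i}

/-- The slice-sum of a set `A ⊆ Fin (n lam)` of `lam`-slices of `T`:
the entrywise sum of the slices of `T` obtained by fixing the `lam`-th
coordinate to the values in `A`. -/
def sliceSum {l : ℕ} {n : Fin l → ℕ} (T : (∀ i, Fin (n i)) → ℝ)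
    (lam : Fin l) (A : Finset (Fin (n lam))) : (∀ i, Fin (n i)) → ℝ :=
  fun x => ∑ j ∈ A, T (Function.update x lam j)

/-- A set `S` of `lam`-slices is independent if all subsets of `S` have
pairwise distinct slice-sums. -/
def IndepSlices {l : ℕ} {n : Fin l → ℕ} (T : (∀ i, Fin (n i)) → ℝ)
    (lam : Fin l) (S : Finset (Fin (n lam))) : Prop :=
  ∀ A ⊆ S, ∀ B ⊆ S, sliceSum T lam A = sliceSum T lam B → A = B

/-- Every Boolean tensor admits some finite rank-one decomposition. -/
lemma decomp_nonempty {l : ℕ} {n : Fin l → ℕ} (T : (∀ i, Fin (n i)) → ℝ)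
    (hT : ∀ x, T x = 0 ∨ T x = 1) :
    ∃ r, ∃ R : Fin r → ((∀ i, Fin (n i)) → ℝ),
      (∀ i, IsRankOneTensor (R i)) ∧ T = ∑ i, R i := by
  classical
  rcases Nat.eq_zero_or_pos l with hl | hl
  · subst hl
    have hx : ∀ x : (∀ i : Fin 0, Fin (n i)), x = (fun i => i.elim0) := by
      intro x; funext i; exact i.elim0
    rcases hT (fun i => i.elim0) with h0 | h1
    · refine ⟨0, Fin.elim0, fun i => i.elim0, ?_⟩
      funext x
      rw [hx x]
      simp [h0]
    · refine ⟨1, fun _ => T, fun _ => ⟨fun i => i.elim0, ?_⟩, ?_⟩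
      · intro x
        rw [hx x]
        simp [h1]
      · funext x; simp
  · set i0 : Fin l := ⟨0, hl⟩ with hi0
    set e := (Fintype.equivFin (∀ i, Fin (n i))).symm with he
    refine ⟨Fintype.card (∀ i, Fin (n i)),
      fun k x => if x = e k then T (e k) else 0, ?_, ?_⟩
    · intro k
      refine ⟨fun i j => if j = e k i then (if i = i0 then T (e k) else 1) else 0, ?_⟩
      intro x
      beta_reduce
      by_cases hxy : x = e k
      · rw [if_pos hxy]
        have : ∀ i, x i = e k i := fun i => by rw [hxy]
        calc T (e k) = ∏ i, (if i = i0 then T (e k) else 1) := by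
              rw [Finset.prod_ite_eq' Finset.univ i0 (fun _ => T (e k))]
              simp
          _ = ∏ i, (if x i = e k i then (if i = i0 then T (e k) else 1) else 0) := by
              refine Finset.prod_congr rfl fun i _ => ?_
              rw [if_pos (this i)]
      · rw [if_neg hxy]
        have hne : ∃ i, x i ≠ e k i := by
          by_contra hc
          push_neg at hc
          exact hxy (funext hc)
        obtain ⟨i, hi⟩ := hne
        refine (Finset.prod_eq_zero (Finset.mem_univ i) ?_).symm
        exact if_neg hi
    · funext x
      rw [Finset.sum_apply]
      have hcomp : ∑ c, (if x = e c then T (e c) else 0)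
          = ∑ y, (if x = y then T y else 0) :=
        Fintype.sum_equiv e _ _ (fun c => rfl)
      rw [hcomp]
      simp

/-- For any family of `r` functions, there is a set of at most `r` points such
that vanishing on those points forces an element of the span to vanish. -/
lemma exists_eval_finset {X : Type*} (r : ℕ) (g : Fin r → (X → ℝ)) :
    ∃ P : Finset X, P.card ≤ r ∧
      ∀ f ∈ Submodule.span ℝ (Set.range g), (∀ x ∈ P, f x = 0) → f = 0 := by
  classical
  induction r with
  | zero =>
    refine ⟨∅, le_refl 0, ?_⟩
    intro f hf _
    rw [Set.range_eq_empty g, Submodule.span_empty, Submodule.mem_bot] at hf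
    exact hf
  | succ r ih =>
    by_cases hx : ∃ x₀, g 0 x₀ ≠ 0
    · obtain ⟨x₀, hx₀⟩ := hx
      set g' : Fin r → (X → ℝ) :=
        fun i => g i.succ - (g i.succ x₀ / g 0 x₀) • g 0 with hg'
      obtain ⟨P, hPc, hP⟩ := ih g'
      refine ⟨insert x₀ P,
        le_trans (Finset.card_insert_le _ _) (Nat.succ_le_succ hPc), ?_⟩
      intro f hf hfz
      have hker : ∀ h ∈ Submodule.span ℝ (Set.range g'), h x₀ = 0 := by
        intro h hh
        have hsub : Set.range g' ⊆
            (LinearMap.ker (LinearMap.proj (R := ℝ) (φ := fun _ : X => ℝ) x₀) :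
              Submodule ℝ (X → ℝ)) := by
          rintro _ ⟨i, rfl⟩
          simp only [SetLike.mem_coe, LinearMap.mem_ker, LinearMap.proj_apply]
          simp only [hg', Pi.sub_apply, Pi.smul_apply, smul_eq_mul]
          field_simp
          ring
        exact (Submodule.span_le.2 hsub) hh
      have hspan : Submodule.span ℝ (Set.range g) ≤
          Submodule.span ℝ (insert (g 0) (Set.range g')) := by
        rw [Submodule.span_le]
        rintro _ ⟨i, rfl⟩
        induction i using Fin.cases with
        | zero => exact Submodule.subset_span (Set.mem_insert _ _)
        | succ i =>
          have hgi : g i.succ = g' i + (g i.succ x₀ / g 0 x₀) • g 0 := by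
            simp [hg']
          rw [hgi]
          exact Submodule.add_mem _
            (Submodule.subset_span (Set.mem_insert_of_mem _ ⟨i, rfl⟩))
            (Submodule.smul_mem _ _ (Submodule.subset_span (Set.mem_insert _ _)))
      have hf' := hspan hf
      rw [Submodule.mem_span_insert] at hf'
      obtain ⟨a, z, hz, rfl⟩ := hf'
      have hz0 : z x₀ = 0 := hker z hz
      have hax : a * g 0 x₀ + z x₀ = 0 := by
        have := hfz x₀ (Finset.mem_insert_self _ _)
        simpa using this
      have ha : a = 0 := by
        rw [hz0, add_zero] at hax
        exact (mul_eq_zero.1 hax).resolve_right hx₀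
      subst ha
      rw [zero_smul, zero_add]
      refine hP z hz fun x hxP => ?_
      have := hfz x (Finset.mem_insert_of_mem hxP)
      simpa using this
    · push_neg at hx
      have hg0 : g 0 = 0 := funext hx
      obtain ⟨P, hPc, hP⟩ := ih (fun i => g i.succ)
      refine ⟨P, le_trans hPc (Nat.le_succ r), ?_⟩
      intro f hf hfz
      have hspan : Submodule.span ℝ (Set.range g) ≤
          Submodule.span ℝ (Set.range fun i : Fin r => g i.succ) := by
        rw [Submodule.span_le]
        rintro _ ⟨i, rfl⟩
        induction i using Fin.cases with
        | zero => rw [hg0]; exact Submodule.zero_mem _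
        | succ i => exact Submodule.subset_span ⟨i, rfl⟩
      exact hP f (hspan hf) hfz

/-- The arithmetic: `2^s ≤ (s+1)^r` implies `s ≤ 7 r log (r+2)`. -/
lemma arith_bound {r s : ℕ} (h : 2 ^ s ≤ (s + 1) ^ r) :
    (s : ℝ) ≤ 7 * (r : ℝ) * Real.log ((r : ℝ) + 2) := by
  rcases Nat.eq_zero_or_pos r with hr | hr
  · subst hr
    have hs : s = 0 := by
      by_contra hs
      have h2 : 1 < 2 ^ s := Nat.one_lt_two_pow_iff.2 hs
      simp only [pow_zero] at h
      omega
    simp [hs]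
  · have hr' : (0 : ℝ) < r := by exact_mod_cast hr
    have hr1 : (1 : ℝ) ≤ r := by exact_mod_cast hr
    have hL2 : (0.6931471803 : ℝ) < Real.log 2 := Real.log_two_gt_d9
    have hL2' : Real.log 2 < 0.6931471808 := Real.log_two_lt_d9
    have hL2pos : (0 : ℝ) < Real.log 2 := by linarith
    set L2 := Real.log 2 with hL2def
    -- basic log inequality from the counting bound
    have hlog : (s : ℝ) * L2 ≤ (r : ℝ) * Real.log ((s : ℝ) + 1) := by
      have h' : (2 : ℝ) ^ s ≤ ((s : ℝ) + 1) ^ r := by exact_mod_cast h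
      have hlog' := Real.log_le_log (by positivity) h'
      rwa [Real.log_pow, Real.log_pow] at hlog'
    set ε : ℝ := L2 / (2 * r) with hε
    have hεpos : 0 < ε := by positivity
    have hre : (r : ℝ) * ε = L2 / 2 := by
      rw [hε]; field_simp
    have hbound : -Real.log ε ≤ Real.log (3 * (r : ℝ)) := by
      rw [← Real.log_inv]
      apply Real.log_le_log (by positivity)
      rw [show ε⁻¹ = 2 * (r : ℝ) / L2 by rw [hε]; field_simp]
      rw [div_le_iff₀ hL2pos]
      nlinarith
    have key2 : (r : ℝ) * Real.log ((s : ℝ) + 1) ≤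
        L2 / 2 * ((s : ℝ) + 1) - r + r * Real.log (3 * (r : ℝ)) := by
      have h1 : Real.log (ε * ((s : ℝ) + 1)) ≤ ε * ((s : ℝ) + 1) - 1 :=
        Real.log_le_sub_one_of_pos (by positivity)
      rw [Real.log_mul (ne_of_gt hεpos) (by positivity)] at h1
      have h2 := mul_le_mul_of_nonneg_left h1 (le_of_lt hr')
      have h3 := mul_le_mul_of_nonneg_left hbound (le_of_lt hr')
      have hre2 : (r : ℝ) * (ε * ((s : ℝ) + 1)) = L2 / 2 * ((s : ℝ) + 1) := by
        rw [← mul_assoc, hre]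
      nlinarith
    have h3r : Real.log (3 * (r : ℝ)) ≤ 2 * Real.log ((r : ℝ) + 2) := by
      have hle : (3 : ℝ) * r ≤ ((r : ℝ) + 2) ^ 2 := by nlinarith
      have := Real.log_le_log (by positivity) hle
      rwa [Real.log_pow, Nat.cast_ofNat] at this
    have hlog3 : 1 < Real.log ((r : ℝ) + 2) := by
      have h3 : (3 : ℝ) ≤ (r : ℝ) + 2 := by linarith
      have hmono : Real.log 3 ≤ Real.log ((r : ℝ) + 2) :=
        Real.log_le_log (by norm_num) h3
      have he : Real.exp 1 < 3 := by
        have := Real.exp_one_lt_d9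
        linarith
      have : 1 < Real.log 3 := (Real.lt_log_iff_exp_lt (by norm_num)).2 he
      linarith
    have hfinal : (s : ℝ) * L2 ≤ L2 / 2 * ((s : ℝ) + 1) - r
        + r * Real.log (3 * (r : ℝ)) := le_trans hlog key2
    have hsnn : (0 : ℝ) ≤ s := Nat.cast_nonneg s
    nlinarith [hfinal, mul_le_mul_of_nonneg_left h3r (le_of_lt hr'),
      mul_le_mul_of_nonneg_left hlog3.le (le_of_lt hr'),
      mul_nonneg (show (0:ℝ) ≤ L2 - 0.6931471803 by linarith) hsnn]

/-- Any independent set of `lam`-slices of a Boolean tensor of tensor rank `r`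
has size at most `O(r log r)`. -/
theorem indep_slices_card_le :
    ∃ C : ℝ, 0 < C ∧
      ∀ (l : ℕ) (n : Fin l → ℕ) (T : (∀ i, Fin (n i)) → ℝ),
        (∀ x, T x = 0 ∨ T x = 1) →
        ∀ r : ℕ, tensorRank T = r →
          ∀ (lam : Fin l) (S : Finset (Fin (n lam))),
            IndepSlices T lam S →
            (S.card : ℝ) ≤ C * (r : ℝ) * Real.log ((r : ℝ) + 2) := by
  classical
  refine ⟨7, by norm_num, ?_⟩
  intro l n T hbool r hrank lam S hindep
  have hne : {r | ∃ R : Fin r → ((∀ i, Fin (n i)) → ℝ),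
      (∀ i, IsRankOneTensor (R i)) ∧ T = ∑ i, R i}.Nonempty :=
    decomp_nonempty T hbool
  have hmem : r ∈ {r | ∃ R : Fin r → ((∀ i, Fin (n i)) → ℝ),
      (∀ i, IsRankOneTensor (R i)) ∧ T = ∑ i, R i} := by
    rw [← hrank]
    exact Nat.sInf_mem hne
  obtain ⟨R, hR1, hR2⟩ := hmem
  have hR1' : ∀ i, ∃ vv : ∀ k : Fin l, Fin (n k) → ℝ,
      ∀ x, R i x = ∏ k, vv k (x k) := hR1
  choose v hv using hR1'
  set s := S.card with hs
  set g : Fin r → ((∀ i, Fin (n i)) → ℝ) :=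
    fun i x => ∏ k ∈ Finset.univ.erase lam, v i k (x k) with hg
  have hslice : ∀ (A : Finset (Fin (n lam))) (x : ∀ i, Fin (n i)),
      sliceSum T lam A x = ∑ i, (∑ j ∈ A, v i lam j) * g i x := by
    intro A x
    unfold sliceSum
    calc ∑ j ∈ A, T (Function.update x lam j)
        = ∑ j ∈ A, ∑ i, R i (Function.update x lam j) := by
          refine Finset.sum_congr rfl fun j _ => ?_
          rw [hR2]
          exact Finset.sum_apply _ _ _
      _ = ∑ i, ∑ j ∈ A, R i (Function.update x lam j) := Finset.sum_comm
      _ = ∑ i, (∑ j ∈ A, v i lam j) * g i x := by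
          refine Finset.sum_congr rfl fun i _ => ?_
          rw [Finset.sum_mul]
          refine Finset.sum_congr rfl fun j _ => ?_
          rw [hv]
          rw [← Finset.mul_prod_erase Finset.univ _ (Finset.mem_univ lam)]
          congr 1
          · rw [Function.update_self]
          · refine Finset.prod_congr rfl fun k hk => ?_
            rw [Function.update_of_ne (Finset.ne_of_mem_erase hk)]
  have hmemspan : ∀ A : Finset (Fin (n lam)),
      sliceSum T lam A ∈ Submodule.span ℝ (Set.range g) := by
    intro A
    have hEq : sliceSum T lam A = ∑ i, (∑ j ∈ A, v i lam j) • g i := by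
      funext x
      rw [hslice]
      rw [Finset.sum_apply]
      simp
    rw [hEq]
    exact Submodule.sum_mem _ fun i _ =>
      Submodule.smul_mem _ _ (Submodule.subset_span ⟨i, rfl⟩)
  obtain ⟨P, hPcard, hP⟩ := exists_eval_finset r g
  set m : Finset (Fin (n lam)) → (∀ i, Fin (n i)) → ℕ :=
    fun A x => (A.filter fun j => T (Function.update x lam j) = 1).card with hm
  have hmval : ∀ A x, sliceSum T lam A x = (m A x : ℝ) := by
    intro A x
    unfold sliceSum
    rw [← Finset.sum_filter_add_sum_filter_not A
      (fun j => T (Function.update x lam j) = 1)]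
    have h1 : ∑ j ∈ A.filter (fun j => T (Function.update x lam j) = 1),
        T (Function.update x lam j) = (m A x : ℝ) := by
      rw [Finset.sum_congr rfl (fun j hj => (Finset.mem_filter.1 hj).2)]
      simp [hm]
    have h2 : ∑ j ∈ A.filter (fun j => ¬(T (Function.update x lam j) = 1)),
        T (Function.update x lam j) = 0 := by
      refine Finset.sum_eq_zero fun j hj => ?_
      rcases hbool (Function.update x lam j) with h | h
      · exact h
      · exact absurd h (Finset.mem_filter.1 hj).2
    rw [h1, h2, add_zero]
  have hinj : ∀ A ⊆ S, ∀ B ⊆ S, (∀ x ∈ P, m A x = m B x) → A = B := by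
    intro A hA B hB hAB
    have hfz : sliceSum T lam A - sliceSum T lam B = 0 := by
      apply hP _ (Submodule.sub_mem _ (hmemspan A) (hmemspan B))
      intro x hxP
      have hx := hAB x hxP
      simp [Pi.sub_apply, hmval, hx]
    exact hindep A hA B hB (sub_eq_zero.1 hfz)
  have hcount : 2 ^ s ≤ (s + 1) ^ r := by
    have hF : S.powerset.card ≤ (Finset.univ : Finset (↥P → Fin (s + 1))).card := by
      apply Finset.card_le_card_of_injOn
        (fun A (p : ↥P) =>
          (⟨min (m A p) s, Nat.lt_succ_of_le (min_le_right _ _)⟩ : Fin (s + 1)))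
        (fun _ _ => Finset.mem_univ _)
      intro A hA B hB hABf
      have hA' : A ⊆ S := Finset.mem_powerset.1 (Finset.mem_coe.1 hA)
      have hB' : B ⊆ S := Finset.mem_powerset.1 (Finset.mem_coe.1 hB)
      refine hinj A hA' B hB' fun x hxP => ?_
      have hcf := congrFun hABf ⟨x, hxP⟩
      have hmA : m A x ≤ s :=
        le_trans (Finset.card_filter_le _ _) (Finset.card_le_card hA')
      have hmB : m B x ≤ s :=
        le_trans (Finset.card_filter_le _ _) (Finset.card_le_card hB')
      have hval : min (m A x) s = min (m B x) s := by
        exact congrArg Fin.val hcf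
      omega
    rw [Finset.card_powerset, Finset.card_univ] at hF
    calc 2 ^ s ≤ Fintype.card (↥P → Fin (s + 1)) := hF
      _ = (s + 1) ^ P.card := by
          rw [Fintype.card_fun, Fintype.card_fin, Fintype.card_coe]
      _ ≤ (s + 1) ^ r := Nat.pow_le_pow_right (Nat.succ_le_succ (Nat.zero_le _)) hPcard
  exact arith_bound hcount
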